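/- Let γ, k, τ > 0. With the 2×2 real matrices A, C, V defined from γ, k, τ as in the context, the stationary variance equation V = A V Aᵀ + C holds. -/
import Mathlib


open Real

/-- `φ(x) = (1 - exp(-x))/x`. -/
noncomputable def phi (x : ℝ) : ℝ := (1 - Real.exp (-x)) / x

set_option maxHeartbeats 1000000 in
/-- The stationary variance equation `V = A V Aᵀ + C` for the discretised Langevin model. -/
theorem langevin_stationary_variance_eq (γ k τ : ℝ) (hγ : 0 < γ) (hk : 0 < k) (hτ : 0 < τ) :
    let A : Matrix (Fin 2) (Fin 2) ℝ := !![0, τ * phi (γ * τ); 0, Real.exp (-(γ * τ))]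
    let C : Matrix (Fin 2) (Fin 2) ℝ :=
      !![2 * k * τ * (1 - 2 * phi (γ * τ) + phi (2 * γ * τ)), k * (γ * τ * phi (γ * τ)) ^ 2;
         k * (γ * τ * phi (γ * τ)) ^ 2, 2 * k * γ ^ 2 * τ * phi (2 * γ * τ)]
    let V : Matrix (Fin 2) (Fin 2) ℝ :=
      !![2 * k * τ * (1 - phi (γ * τ)), k * γ * τ * phi (γ * τ);
         k * γ * τ * phi (γ * τ), k * γ]
    V = A * V * A.transpose + C := by
  intro A C V
  have hgt : γ * τ ≠ 0 := by positivity
  have h2 : Real.exp (-(2 * γ * τ)) = Real.exp (-(γ * τ)) ^ 2 := by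
    rw [← Real.exp_nat_mul]; ring_nf
  have hp1 : phi (γ * τ) = (1 - Real.exp (-(γ * τ))) / (γ * τ) := rfl
  have hp2 : phi (2 * γ * τ) = (1 - Real.exp (-(γ * τ)) ^ 2) / (2 * γ * τ) := by
    rw [phi, h2]
  have hAT : A.transpose = !![0, 0; τ * phi (γ * τ), Real.exp (-(γ * τ))] := by
    ext i j; fin_cases i <;> fin_cases j <;> simp [A]
  rw [hAT]
  show V = _
  simp only [A, C, V, Matrix.mul_fin_two]
  ext i j
  fin_cases i <;> fin_cases j <;>
    · simp [hp1, hp2]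
      field_simp
      ring
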